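/- For every real x with 0 < x ≤ 1 and 0 ≤ v ≤ 1, we have m_v(x) · x^v ≤ (1-v) + v x ≤ M_v(x) · x^v, where m_v(x) = 1 + 2^v · v(1-v)(x-1)^2/(x+1)^(v+1) and M_v(x) = 1 + v(1-v)(x-1)^2/(2 x^(v+1)). -/

import Mathlib

open Real intervalIntegral Set

private lemma bern_nonpos' {u p : ℝ} (hu : 0 < u) (hp : 1 ≤ -p) : 1 + p * (u - 1) ≤ u ^ p := by
  have hs : (-1 : ℝ) ≤ 1/u - 1 := by
    have : 0 < 1/u := by positivity
    linarith
  have h1 := one_add_mul_self_le_rpow_one_add hs hp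
  have h2 : (1 + (1/u - 1)) ^ (-p) = u ^ p := by
    rw [show 1 + (1/u - 1) = u⁻¹ by ring, ← Real.rpow_neg_one u, ← Real.rpow_mul hu.le]
    norm_num
  rw [h2] at h1
  refine le_trans ?_ h1
  have hp0 : p ≤ 0 := by linarith
  have e : -p * (1/u - 1) - p * (u - 1) = (-p) * (u-1)^2 / u := by
    field_simp
    ring
  have key : 0 ≤ (-p) * (u-1)^2 / u := by positivity
  linarith [e ▸ key]

private lemma tangent_rpow' {t c p : ℝ} (ht : 0 < t) (hc : 0 < c) (hp : 1 ≤ -p) :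
    c ^ p + p * (c ^ p / c) * (t - c) ≤ t ^ p := by
  have h := bern_nonpos' (u := t/c) (by positivity) hp
  rw [Real.div_rpow ht.le hc.le] at h
  have hcp : 0 < c ^ p := Real.rpow_pos_of_pos hc p
  have := mul_le_mul_of_nonneg_left h hcp.le
  rw [mul_div_cancel₀ _ hcp.ne'] at this
  calc c ^ p + p * (c ^ p / c) * (t - c) = c ^ p * (1 + p * (t/c - 1)) := by
        field_simp
    _ ≤ t ^ p := this

private lemma young_ident' {x v : ℝ} (hx0 : 0 < x) (hx1 : x ≤ 1) (hv0 : 0 < v) (hv1 : v < 1) :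
    v * (1 - v) * ∫ t in x..(1:ℝ), (t - x) * t ^ (v - 2)
      = 1 - v + v * x - x ^ v := by
  have h0 : (0:ℝ) ∉ Set.uIcc x 1 := Set.notMem_uIcc_of_lt hx0 one_pos
  have hIcc : Set.uIcc x 1 = Set.Icc x 1 := Set.uIcc_of_le hx1
  have hcongr : ∫ t in x..(1:ℝ), (t - x) * t ^ (v - 2)
      = ∫ t in x..(1:ℝ), (t ^ (v-1) - x * t ^ (v - 2)) := by
    apply intervalIntegral.integral_congr
    intro t ht
    rw [hIcc] at ht
    have ht0 : 0 < t := lt_of_lt_of_le hx0 ht.1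
    simp only
    rw [show v - 1 = (v-2) + 1 by ring, Real.rpow_add_one ht0.ne']
    ring
  have int1 : IntervalIntegrable (fun t : ℝ => t ^ (v-1)) MeasureTheory.volume x 1 := by
    apply ContinuousOn.intervalIntegrable
    apply ContinuousOn.rpow_const continuousOn_id
    intro t ht
    rw [hIcc] at ht
    exact Or.inl (ne_of_gt (lt_of_lt_of_le hx0 ht.1))
  have int2 : IntervalIntegrable (fun t : ℝ => x * t ^ (v-2)) MeasureTheory.volume x 1 := by
    apply ContinuousOn.intervalIntegrable
    apply ContinuousOn.const_smul ?_ x |>.congr (fun t ht => rfl)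
    apply ContinuousOn.rpow_const continuousOn_id
    intro t ht
    rw [hIcc] at ht
    exact Or.inl (ne_of_gt (lt_of_lt_of_le hx0 ht.1))
  have e1 : ∫ t in x..(1:ℝ), t ^ (v-1) = (1 - x ^ v)/v := by
    rw [integral_rpow (Or.inl (by linarith))]
    rw [show v - 1 + 1 = v by ring]
    simp [Real.one_rpow]
  have e2 : ∫ t in x..(1:ℝ), t ^ (v-2) = (1 - x ^ (v-1))/(v-1) := by
    rw [integral_rpow (Or.inr ⟨by intro h; apply absurd (by linarith : v = 1) (ne_of_lt hv1), h0⟩)]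
    rw [show v - 2 + 1 = v - 1 by ring]
    simp [Real.one_rpow]
  rw [hcongr, intervalIntegral.integral_sub int1 int2, e1,
    intervalIntegral.integral_const_mul, e2]
  have E : x ^ (v-1) = x ^ v / x := Real.rpow_sub_one hx0.ne' v
  rw [E]
  have hv1' : v - 1 ≠ 0 := by intro h; exact absurd (by linarith : v = 1) (ne_of_lt hv1)
  field_simp
  ring

private lemma young_I_upper' {x v : ℝ} (hx0 : 0 < x) (hx1 : x ≤ 1) (hv0 : 0 ≤ v) :
    ∫ t in x..(1:ℝ), (t - x) * t ^ (v - 2) ≤ (1-x)^2/(2*x) := by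
  have hIcc : Set.uIcc x 1 = Set.Icc x 1 := Set.uIcc_of_le hx1
  have contL : ContinuousOn (fun t : ℝ => (t - x) * t ^ (v-2)) (Set.uIcc x 1) := by
    apply ContinuousOn.mul (by fun_prop)
    apply ContinuousOn.rpow_const continuousOn_id
    intro t ht
    rw [hIcc] at ht
    exact Or.inl (ne_of_gt (lt_of_lt_of_le hx0 ht.1))
  have contR : ContinuousOn (fun t : ℝ => (1 - x^2/t^2)/(2*x)) (Set.uIcc x 1) := by
    apply ContinuousOn.div_const
    apply ContinuousOn.sub continuousOn_const
    apply ContinuousOn.div continuousOn_const (by fun_prop)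
    intro t ht
    rw [hIcc] at ht
    exact pow_ne_zero 2 (ne_of_gt (lt_of_lt_of_le hx0 ht.1))
  have mono : ∫ t in x..(1:ℝ), (t - x) * t ^ (v - 2)
      ≤ ∫ t in x..(1:ℝ), (1 - x^2/t^2)/(2*x) := by
    apply intervalIntegral.integral_mono_on hx1
      (contL.intervalIntegrable) (contR.intervalIntegrable)
    intro t ht
    have ht0 : 0 < t := lt_of_lt_of_le hx0 ht.1
    have htx : x ≤ t := ht.1
    have ht1 : t ≤ 1 := ht.2
    have hsplit : t ^ (v-2) = t ^ v / t^2 := by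
      rw [Real.rpow_sub ht0, show (2:ℝ) = ((2:ℕ):ℝ) by norm_num, Real.rpow_natCast]
    rw [hsplit]
    have hv' : t ^ v ≤ 1 := Real.rpow_le_one ht0.le ht1 hv0
    have h1 : (t - x) * (t ^ v / t^2) ≤ (t - x) / t^2 := by
      calc (t - x) * (t ^ v / t^2) ≤ (t - x) * (1 / t^2) := by
              apply mul_le_mul_of_nonneg_left _ (by linarith)
              apply (div_le_div_iff_of_pos_right (by positivity)).mpr hv'
        _ = (t - x) / t^2 := by ring
    refine h1.trans ?_
    have hform : (1 - x^2/t^2)/(2*x) = (t^2 - x^2)/(2*x*t^2) := by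
      rw [eq_div_iff (by positivity)]
      field_simp
    rw [hform, div_le_div_iff₀ (by positivity) (by positivity)]
    nlinarith [mul_nonneg (mul_nonneg (sq_nonneg (t-x)) ht0.le) ht0.le]
  refine mono.trans_eq ?_
  have hderiv : ∀ t ∈ Set.uIcc x (1:ℝ),
      HasDerivAt (fun t : ℝ => (t + x^2 * t⁻¹)/(2*x)) ((1 - x^2/t^2)/(2*x)) t := by
    intro t ht
    rw [hIcc] at ht
    have ht0 : 0 < t := lt_of_lt_of_le hx0 ht.1
    have h := ((hasDerivAt_id t).add (((hasDerivAt_inv ht0.ne').const_mul (x^2)))).div_const (2*x)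
    exact h.congr_deriv (by ring)
  rw [integral_eq_sub_of_hasDerivAt hderiv contR.intervalIntegrable]
  field_simp
  ring

private lemma young_I_lower' {x v : ℝ} (hx0 : 0 < x) (hx1 : x ≤ 1) (hv1 : v ≤ 1) :
    (1-x)^2/2 * ((2+x)/3) ^ (v-2) ≤ ∫ t in x..(1:ℝ), (t - x) * t ^ (v - 2) := by
  have hIcc : Set.uIcc x 1 = Set.Icc x 1 := Set.uIcc_of_le hx1
  set c : ℝ := (2+x)/3 with hc
  have hcpos : 0 < c := by positivity
  set a : ℝ := c ^ (v-2) with ha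
  set b : ℝ := (v-2) * (a / c) with hb
  have hp : 1 ≤ -(v-2) := by linarith
  have contL : ContinuousOn (fun t : ℝ => (t - x) * t ^ (v-2)) (Set.uIcc x 1) := by
    apply ContinuousOn.mul (by fun_prop)
    apply ContinuousOn.rpow_const continuousOn_id
    intro t ht
    rw [hIcc] at ht
    exact Or.inl (ne_of_gt (lt_of_lt_of_le hx0 ht.1))
  have contR : Continuous (fun t : ℝ => (t - x) * (a + b * (t - c))) := by fun_prop
  have mono : ∫ t in x..(1:ℝ), (t - x) * (a + b * (t - c))
      ≤ ∫ t in x..(1:ℝ), (t - x) * t ^ (v - 2) := by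
    apply intervalIntegral.integral_mono_on hx1
      (contR.intervalIntegrable x 1) (contL.intervalIntegrable)
    intro t ht
    have ht0 : 0 < t := lt_of_lt_of_le hx0 ht.1
    have htan := tangent_rpow' ht0 hcpos hp
    have h2 : a + b * (t - c) ≤ t ^ (v-2) := by rw [ha, hb]; exact htan
    exact mul_le_mul_of_nonneg_left h2 (by linarith [ht.1])
  refine le_trans (le_of_eq ?_) mono
  have hderiv : ∀ t ∈ Set.uIcc x (1:ℝ),
      HasDerivAt (fun t : ℝ => b*t^3/3 + (a - b*(c+x))*t^2/2 + (b*x*c - a*x)*t)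
        ((t - x) * (a + b * (t - c))) t := by
    intro t _
    have h : HasDerivAt (fun t : ℝ => b*t^3/3 + (a - b*(c+x))*t^2/2 + (b*x*c - a*x)*t)
        (b*(3*t^2)/3 + (a - b*(c+x))*(2*t)/2 + (b*x*c - a*x)*1) t := by
      apply HasDerivAt.add
      apply HasDerivAt.add
      · exact ((hasDerivAt_pow 3 t).const_mul b).div_const 3 |>.congr_deriv (by push_cast; ring)
      · exact ((hasDerivAt_pow 2 t).const_mul (a - b*(c+x))).div_const 2 |>.congr_deriv (by push_cast; ring)
      · exact (hasDerivAt_id t).const_mul (b*x*c - a*x) |>.congr_deriv (by ring)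
    exact h.congr_deriv (by ring)
  rw [integral_eq_sub_of_hasDerivAt hderiv (contR.intervalIntegrable x 1)]
  rw [hb, hc]
  field_simp
  ring

theorem young_multiplicative_refine (x v : ℝ) (hx0 : 0 < x) (hx1 : x ≤ 1)
    (hv0 : 0 ≤ v) (hv1 : v ≤ 1) :
    (1 + (2 : ℝ) ^ v * v * (1 - v) * (x - 1) ^ 2 / (x + 1) ^ (v + 1)) * x ^ v
      ≤ (1 - v) + v * x ∧
    (1 - v) + v * x
      ≤ (1 + v * (1 - v) * (x - 1) ^ 2 / (2 * x ^ (v + 1))) * x ^ v := by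
  rcases eq_or_lt_of_le hv0 with hv0' | hv0'
  · subst hv0'
    constructor <;> norm_num [Real.rpow_zero, Real.rpow_one]
  rcases eq_or_lt_of_le hv1 with hv1' | hv1'
  · subst hv1'
    constructor <;> norm_num [Real.rpow_one]
  -- main case 0 < v < 1
  have hxv : 0 < x ^ v := Real.rpow_pos_of_pos hx0 v
  have hxv1 : x ^ (v+1) = x ^ v * x := Real.rpow_add_one hx0.ne' v
  have hvv : 0 < v * (1 - v) := by nlinarith
  have ident := young_ident' hx0 hx1 hv0' hv1'
  constructor
  · -- lower bound
    set c : ℝ := (2+x)/3 with hc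
    set A : ℝ := (x+1)/2 with hA
    have hcpos : 0 < c := by positivity
    have hApos : 0 < A := by positivity
    have hAv1 : 0 < A ^ (v+1) := Real.rpow_pos_of_pos hApos _
    have hlow : v * (1-v) * ((1-x)^2/2 * c ^ (v-2)) ≤ 1 - v + v * x - x ^ v := by
      rw [← ident]
      exact mul_le_mul_of_nonneg_left (young_I_lower' hx0 hx1 hv1) hvv.le
    -- key2 : x^v ≤ A^(v+1) * c^(v-2)
    have h1 : x ≤ A * c := by rw [hA, hc]; nlinarith
    have h2 : c^2 ≤ A := by rw [hA, hc]; nlinarith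
    have hsplitA : A ^ (v+1) = A ^ v * A := Real.rpow_add_one hApos.ne' v
    have hsplitc : c ^ (v-2) = c ^ v / c^2 := by
      rw [Real.rpow_sub hcpos, show (2:ℝ) = ((2:ℕ):ℝ) by norm_num, Real.rpow_natCast]
    have key2 : x ^ v ≤ A ^ (v+1) * c ^ (v-2) := by
      have s1 : x ^ v ≤ (A*c) ^ v := Real.rpow_le_rpow hx0.le h1 hv0
      have s2 : (A*c) ^ v = A ^ v * c ^ v := Real.mul_rpow hApos.le hcpos.le
      have s3 : A ^ v * c ^ v ≤ A ^ v * c ^ v * (A / c^2) := by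
        apply le_mul_of_one_le_right (by positivity)
        rw [le_div_iff₀ (by positivity)]
        linarith
      have s4 : A ^ v * c ^ v * (A / c^2) = A ^ (v+1) * c ^ (v-2) := by
        rw [hsplitA, hsplitc]
        field_simp
      calc x ^ v ≤ A ^ v * c ^ v := s2 ▸ s1
        _ ≤ A ^ v * c ^ v * (A / c^2) := s3
        _ = A ^ (v+1) * c ^ (v-2) := s4
    have hx1A : (x+1) ^ (v+1) = 2 ^ v * 2 * A ^ (v+1) := by
      rw [show x + 1 = 2 * A by rw [hA]; ring, Real.mul_rpow (by norm_num) hApos.le,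
        Real.rpow_add_one (by norm_num : (2:ℝ) ≠ 0)]
    have h2v : (0:ℝ) < 2 ^ v := Real.rpow_pos_of_pos (by norm_num) v
    have key3 : 2 ^ v * x ^ v / (x+1) ^ (v+1) ≤ c ^ (v-2) / 2 := by
      rw [hx1A, div_le_div_iff₀ (by positivity) (by norm_num)]
      calc 2 ^ v * x ^ v * 2 ≤ 2 ^ v * (A ^ (v+1) * c ^ (v-2)) * 2 := by
            apply mul_le_mul_of_nonneg_right _ (by norm_num)
            exact mul_le_mul_of_nonneg_left key2 h2v.le
        _ = c ^ (v-2) * (2 ^ v * 2 * A ^ (v+1)) := by ring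
    have hfac : 0 ≤ v * (1-v) * (x-1)^2 := by positivity
    have step := mul_le_mul_of_nonneg_left key3 hfac
    have lhs_eq : (1 + (2:ℝ) ^ v * v * (1 - v) * (x - 1) ^ 2 / (x + 1) ^ (v + 1)) * x ^ v
        = x ^ v + v * (1-v) * (x-1)^2 * (2 ^ v * x ^ v / (x+1) ^ (v+1)) := by
      ring
    have req : v * (1-v) * (x-1)^2 * (c ^ (v-2) / 2) = v * (1-v) * ((1-x)^2/2 * c ^ (v-2)) := by
      ring
    rw [lhs_eq]
    nlinarith [step, hlow, req]
  · -- upper bound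
    have hup : 1 - v + v * x - x ^ v ≤ v * (1-v) * ((1-x)^2/(2*x)) := by
      rw [← ident]
      exact mul_le_mul_of_nonneg_left (young_I_upper' hx0 hx1 hv0) hvv.le
    have rhs_eq : (1 + v * (1 - v) * (x - 1) ^ 2 / (2 * x ^ (v + 1))) * x ^ v
        = x ^ v + v * (1-v) * ((1-x)^2/(2*x)) := by
      rw [hxv1]
      field_simp
      ring
    rw [rhs_eq]
    linarith
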